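/- Fix s ∈ S_0, t > t_s, A ≥ 1 and B, C ≥ 0. Then for every K ≥ 1 there is an N ∈ ℕ such that for all n ≥ N, F^∘n(t) ≥ A t*_{σ^n s} + B log K + C. Moreover, letting N(K, t) be the least such N: (1) for fixed K, N(K, t) is weakly monotonically decreasing in t; (2) if t ≥ A t_s* + B log K + C then N(K, t) = 0; (3) if N_0 satisfies F^∘N_0(t) ≥ A t*_{σ^{N_0} s} + C + 1 and N_1 satisfies F^∘N_1(1) ≥ B log K, then F^∘n(t) ≥ A t*_{σ^n s} + B log K + C holds for all n ≥ N_0 + N_1. -/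

import Mathlib

open Filter Topology Set MeasureTheory
open scoped ENNReal Real

noncomputable section

/-- The exponential family `E_κ(z) = exp (z + κ)`. -/
def Ek (κ : ℂ) (z : ℂ) : ℂ := Complex.exp (z + κ)

/-- The model function `F(t) = e^t - 1` for exponential growth. -/
def F (t : ℝ) : ℝ := Real.exp t - 1

/-- The inverse of `F` on the nonnegative reals. -/
def Finv (t : ℝ) : ℝ := Real.log (t + 1)

/-- The shift map `σ` on integer sequences; the sequence `s : ℕ → ℤ` represents
`(s_1, s_2, …)` with `s_{k+1} = s k`. -/
def shiftSeq (s : ℕ → ℤ) : ℕ → ℤ := fun n => s (n + 1)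

/-- Exponentially bounded sequences (membership in `S_0`). -/
def expBounded (s : ℕ → ℤ) : Prop := ∃ x > 0, ∀ k : ℕ, |(s k : ℝ)| ≤ F^[k] x

/-- `t_s^* = sup_{n ≥ 1} F^{∘(-n+1)}(|s_n|)`, as an extended nonnegative real. -/
def tstar (s : ℕ → ℤ) : ℝ≥0∞ := ⨆ n : ℕ, ENNReal.ofReal (Finv^[n] |(s n : ℝ)|)

/-- `t_s^*` as a real number (for exponentially bounded `s`). -/
def tstarR (s : ℕ → ℤ) : ℝ := (tstar s).toReal

/-- The minimal potential `t_s`. -/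
def tmin (s : ℕ → ℤ) : ℝ≥0∞ :=
  sInf { y : ℝ≥0∞ | ∃ x : ℝ, 0 < x ∧ y = ENNReal.ofReal x ∧
    Filter.limsup (fun n => ENNReal.ofReal (|(s n : ℝ)| / F^[n] x)) Filter.atTop = 0 }

/-- The slit plane `ℂ' = ℂ ∖ (-∞, 0]`. -/
def Cprime : Set ℂ := {z : ℂ | 0 < z.re ∨ z.im ≠ 0}

/-- The inverse branch `L_{κ,j}(z) = Log z - κ + 2πij`. -/
def Lk (κ : ℂ) (j : ℤ) (z : ℂ) : ℂ :=
  Complex.log z - κ + 2 * (Real.pi : ℂ) * Complex.I * (j : ℂ)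

/-- The pullback approximants `g^n_{κ,s}(t) = L_{κ,s_1} ∘ ⋯ ∘ L_{κ,s_n}(F^∘n(t))`. -/
def gApprox (κ : ℂ) : ℕ → (ℕ → ℤ) → ℝ → ℂ
  | 0, _, t => (t : ℂ)
  | n + 1, s, t => Lk κ (s 0) (gApprox κ n (shiftSeq s) (F t))

/-- All intermediate values of the `n`-th pullback approximant lie in the slit plane. -/
def approxDefined (κ : ℂ) : ℕ → (ℕ → ℤ) → ℝ → Prop
  | 0, _, _ => True
  | n + 1, s, t => gApprox κ n (shiftSeq s) (F t) ∈ Cprime ∧ approxDefined κ n (shiftSeq s) (F t)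

/-- The pullback approximants at `(s, t)` are eventually defined and converge to `z`. -/
def RayTendsto (κ : ℂ) (s : ℕ → ℤ) (t : ℝ) (z : ℂ) : Prop :=
  (∀ᶠ n in Filter.atTop, approxDefined κ n s t) ∧
  Filter.Tendsto (fun n => gApprox κ n s t) Filter.atTop (nhds z)

/-- The dynamic ray of `E_κ` at address `s` is defined at potential `t`. -/
def RayDefinedAt (κ : ℂ) (s : ℕ → ℤ) (t : ℝ) : Prop := ∃ z, RayTendsto κ s t z

-- The dynamic ray `g_s^κ(t)` (junk value `0` where undefined).
open Classical in
def ray (κ : ℂ) (s : ℕ → ℤ) (t : ℝ) : ℂ :=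
  if h : ∃ z, RayTendsto κ s t z then h.choose else 0

/-- The set `𝒢_s(t)` of parameters `κ` for which the dynamic ray of `E_κ` at address `s`
is defined at potential `t` with `g_s^κ(t) = 0`. -/
def Gset (s : ℕ → ℤ) (t : ℝ) : Set ℂ :=
  {κ : ℂ | ∃ N : ℕ, RayTendsto κ (shiftSeq^[N] s) (F^[N] t) ((Ek κ)^[N] 0)}

/-- The set `I` of escaping parameters. -/
def escapingParams : Set ℂ :=
  {κ : ℂ | Filter.Tendsto (fun n => ‖(Ek κ)^[n] 0‖) Filter.atTop Filter.atTop}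

/-- The interval `(t_s, ∞)` of potentials. -/
def rayDomain (s : ℕ → ℤ) : Set ℝ := {t : ℝ | tmin s < ENNReal.ofReal t}

/-- `κ₀` is a simple root of the holomorphic map `κ ↦ g_s^κ(t)`. -/
def SimpleRoot (s : ℕ → ℤ) (t : ℝ) (κ₀ : ℂ) : Prop :=
  ray κ₀ s t = 0 ∧ RayDefinedAt κ₀ s t ∧
  ∃ U ∈ nhds κ₀, (∀ κ ∈ U, RayDefinedAt κ s t) ∧
    DifferentiableOn ℂ (fun κ => ray κ s t) U ∧
    deriv (fun κ => ray κ s t) κ₀ ≠ 0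

end

section BIS
open Filter

lemma BIS_F_mono : Monotone F := fun a b h => by
  simpa [F] using Real.exp_le_exp.2 h

lemma BIS_le_F (t : ℝ) : t ≤ F t := by
  have := Real.add_one_le_exp t; simp [F]; linarith

lemma BIS_F_nonneg {t : ℝ} (ht : 0 ≤ t) : 0 ≤ F t := le_trans ht (BIS_le_F t)

lemma BIS_iterF_nonneg {t : ℝ} (ht : 0 ≤ t) (n : ℕ) : 0 ≤ F^[n] t := by
  induction n with
  | zero => simpa
  | succ n ih => rw [Function.iterate_succ_apply']; exact BIS_F_nonneg ih

lemma BIS_F_pos {t : ℝ} (ht : 0 < t) : 0 < F t := by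
  have := Real.add_one_lt_exp (ne_of_gt ht); simp [F]; linarith

lemma BIS_iterF_pos {t : ℝ} (ht : 0 < t) (n : ℕ) : 0 < F^[n] t := by
  induction n with
  | zero => simpa
  | succ n ih => rw [Function.iterate_succ_apply']; exact BIS_F_pos ih

lemma BIS_iterF_mono (n : ℕ) : Monotone (F^[n]) := BIS_F_mono.iterate n

lemma BIS_one_le_iterF (n : ℕ) : 1 ≤ F^[n] (1:ℝ) := by
  induction n with
  | zero => simp
  | succ n ih =>
    rw [Function.iterate_succ_apply']
    exact le_trans ih (BIS_le_F _)

lemma BIS_Finv_F (t : ℝ) : Finv (F t) = t := by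
  simp [F, Finv, Real.log_exp]

lemma BIS_F_Finv {t : ℝ} (ht : 0 ≤ t) : F (Finv t) = t := by
  simp [F, Finv, Real.exp_log (by linarith : (0:ℝ) < t + 1)]

lemma BIS_Finv_nonneg {t : ℝ} (ht : 0 ≤ t) : 0 ≤ Finv t :=
  Real.log_nonneg (by linarith)

lemma BIS_Finv_mono {a b : ℝ} (ha : 0 ≤ a) (h : a ≤ b) : Finv a ≤ Finv b :=
  Real.log_le_log (by linarith) (by linarith)

lemma BIS_iterFinv_nonneg {t : ℝ} (ht : 0 ≤ t) (n : ℕ) : 0 ≤ Finv^[n] t := by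
  induction n with
  | zero => simpa
  | succ n ih => rw [Function.iterate_succ_apply']; exact BIS_Finv_nonneg ih

lemma BIS_iterFinv_mono {a b : ℝ} (ha : 0 ≤ a) (h : a ≤ b) (n : ℕ) :
    Finv^[n] a ≤ Finv^[n] b := by
  induction n with
  | zero => simpa
  | succ n ih =>
    rw [Function.iterate_succ_apply', Function.iterate_succ_apply']
    exact BIS_Finv_mono (BIS_iterFinv_nonneg ha n) ih

lemma BIS_iterFinv_iterF (n : ℕ) (t : ℝ) : Finv^[n] (F^[n] t) = t := by
  induction n with
  | zero => simp
  | succ n ih =>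
    rw [Function.iterate_succ_apply' (f := F), Function.iterate_succ_apply (f := Finv),
      BIS_Finv_F, ih]

lemma BIS_tstar_le {s : ℕ → ℤ} {y : ℝ} (hy : 0 ≤ y)
    (h : ∀ k, |(s k : ℝ)| ≤ F^[k] y) : tstar s ≤ ENNReal.ofReal y := by
  refine iSup_le fun n => ENNReal.ofReal_le_ofReal ?_
  calc Finv^[n] |(s n : ℝ)| ≤ Finv^[n] (F^[n] y) :=
        BIS_iterFinv_mono (abs_nonneg _) (h n) n
    _ = y := BIS_iterFinv_iterF n y

lemma BIS_tstarR_le {s : ℕ → ℤ} {y : ℝ} (hy : 0 ≤ y)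
    (h : ∀ k, |(s k : ℝ)| ≤ F^[k] y) : tstarR s ≤ y := by
  simp only [tstarR]
  exact ENNReal.toReal_le_of_le_ofReal hy (BIS_tstar_le hy h)

lemma BIS_tstarR_nonneg (s : ℕ → ℤ) : 0 ≤ tstarR s := by
  simp only [tstarR]; exact ENNReal.toReal_nonneg

lemma BIS_term_le_tstarR {s : ℕ → ℤ} (h : tstar s ≠ ⊤) (n : ℕ) :
    Finv^[n] |(s n : ℝ)| ≤ tstarR s := by
  simp only [tstarR]
  have h1 : ENNReal.ofReal (Finv^[n] |(s n : ℝ)|) ≤ tstar s := by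
    simp only [tstar]
    exact le_iSup (fun n => ENNReal.ofReal (Finv^[n] |(s n : ℝ)|)) n
  have h2 := ENNReal.toReal_mono h h1
  rwa [ENNReal.toReal_ofReal (BIS_iterFinv_nonneg (abs_nonneg _) n)] at h2

lemma BIS_shift_iter_apply (s : ℕ → ℤ) (n k : ℕ) : shiftSeq^[n] s k = s (n + k) := by
  induction n generalizing s k with
  | zero => simp
  | succ n ih =>
    rw [Function.iterate_succ_apply, ih]
    simp [shiftSeq]; ring_nf

lemma BIS_expBounded_shift_iter {s : ℕ → ℤ} (hs : expBounded s) (n : ℕ) :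
    expBounded (shiftSeq^[n] s) := by
  obtain ⟨x, hx, h⟩ := hs
  refine ⟨F^[n] x, BIS_iterF_pos hx n, fun k => ?_⟩
  rw [BIS_shift_iter_apply, ← Function.iterate_add_apply]
  simpa [Nat.add_comm] using h (n + k)

lemma BIS_tstar_ne_top {s : ℕ → ℤ} (hs : expBounded s) : tstar s ≠ ⊤ := by
  obtain ⟨x, hx, h⟩ := hs
  exact ne_top_of_le_ne_top ENNReal.ofReal_ne_top (BIS_tstar_le hx.le h)

lemma BIS_tstarR_shift_le {s : ℕ → ℤ} (hs : expBounded s) :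
    tstarR (shiftSeq s) ≤ F (tstarR s) := by
  have hFt : 0 ≤ F (tstarR s) := BIS_F_nonneg (BIS_tstarR_nonneg s)
  simp only [tstarR, tstar]
  refine ENNReal.toReal_le_of_le_ofReal hFt (iSup_le fun n => ENNReal.ofReal_le_ofReal ?_)
  have habs : (|((shiftSeq s) n : ℝ)|) = |(s (n+1) : ℝ)| := by simp [shiftSeq]
  rw [habs]
  have h1 : Finv^[n] |(s (n+1) : ℝ)| = F (Finv^[n+1] |(s (n+1) : ℝ)|) := by
    rw [Function.iterate_succ_apply' (f := Finv), BIS_F_Finv (BIS_iterFinv_nonneg (abs_nonneg _) n)]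
  rw [h1]
  exact BIS_F_mono (BIS_term_le_tstarR (BIS_tstar_ne_top hs) (n+1))

-- Bernoulli-type inequality
lemma BIS_bern {A u : ℝ} (hA : 1 ≤ A) (hu : 0 ≤ u) :
    1 + A * (Real.exp u - 1) ≤ Real.exp (A * u) := by
  have h1 : Real.exp (A * u) = Real.exp u * Real.exp ((A - 1) * u) := by
    rw [← Real.exp_add]; ring_nf
  have h2 : (A - 1) * u + 1 ≤ Real.exp ((A - 1) * u) := Real.add_one_le_exp _
  have h3 : Real.exp u - 1 ≤ u * Real.exp u := by
    have h4 : (-u) + 1 ≤ Real.exp (-u) := Real.add_one_le_exp _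
    have h5 : Real.exp (-u) * Real.exp u = 1 := by
      rw [← Real.exp_add]; simp
    nlinarith [Real.exp_pos u]
  nlinarith [Real.exp_pos u, mul_le_mul_of_nonneg_left h2 (Real.exp_pos u).le,
    mul_le_mul_of_nonneg_left h3 (by linarith : (0:ℝ) ≤ A - 1)]

lemma BIS_step1 {A u v D : ℝ} (hA : 1 ≤ A) (hu : 0 ≤ u) (hD : 0 ≤ D)
    (h : A * u + D ≤ v) : A * F u + D ≤ F v := by
  have h1 : Real.exp (A * u + D) ≤ Real.exp v := Real.exp_le_exp.2 h
  have h2 : Real.exp (A * u + D) = Real.exp (A * u) * Real.exp D := Real.exp_add _ _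
  have h3 := BIS_bern hA hu
  have h4 : D + 1 ≤ Real.exp D := Real.add_one_le_exp D
  have h5 : 0 ≤ A * (Real.exp u - 1) := by
    have := Real.one_le_exp hu; nlinarith
  simp only [F]
  nlinarith [Real.exp_pos D]

lemma BIS_step2 {A u v w C : ℝ} (hA : 1 ≤ A) (hu : 0 ≤ u) (hC : 0 ≤ C) (hw : 1 ≤ w)
    (h : A * u + C + w ≤ v) : A * F u + C + F w ≤ F v := by
  have h1 : Real.exp (A * u + C + w) ≤ Real.exp v := Real.exp_le_exp.2 h
  have h2 : Real.exp (A * u + C + w) = Real.exp (A * u) * Real.exp C * Real.exp w := by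
    rw [← Real.exp_add, ← Real.exp_add]
  have h3 := BIS_bern hA hu
  have h4 : C + 1 ≤ Real.exp C := Real.add_one_le_exp C
  have h5 : 0 ≤ A * (Real.exp u - 1) := by
    have := Real.one_le_exp hu; nlinarith
  have h6 : 1 ≤ Real.exp w := Real.one_le_exp (by linarith)
  simp only [F]
  have h7 : (1 + A * (Real.exp u - 1)) * (C + 1) ≤ Real.exp (A * u) * Real.exp C :=
    mul_le_mul h3 h4 (by linarith) (by positivity)
  have h8 : (1 + A * (Real.exp u - 1)) * (C + 1) * Real.exp w ≤
      Real.exp (A * u) * Real.exp C * Real.exp w :=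
    mul_le_mul_of_nonneg_right h7 (by positivity)
  have h9 : (A * (Real.exp u - 1) + C + A * (Real.exp u - 1) * C) * 1 ≤
      (A * (Real.exp u - 1) + C + A * (Real.exp u - 1) * C) * Real.exp w :=
    mul_le_mul_of_nonneg_left h6 (by nlinarith)
  nlinarith [mul_nonneg h5 hC]

lemma BIS_F_diff {a b : ℝ} (hab : a ≤ b) : Real.exp a * (b - a) ≤ F b - F a := by
  have h1 : Real.exp b = Real.exp a * Real.exp (b - a) := by rw [← Real.exp_add]; ring_nf
  have h2 : (b - a) + 1 ≤ Real.exp (b - a) := Real.add_one_le_exp _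
  simp only [F]
  nlinarith [Real.exp_pos a]

lemma BIS_iterF_tendsto {x : ℝ} (hx : 0 < x) :
    Tendsto (fun n => F^[n] x) atTop atTop := by
  set c := Real.exp x - 1 - x with hc
  have hcpos : 0 < c := by
    have := Real.add_one_lt_exp (ne_of_gt hx); simp [hc]; linarith
  have hgap : ∀ u : ℝ, x ≤ u → u + c ≤ F u := by
    intro u hu
    have h1 : Real.exp x * (u - x) ≤ F u - F x := BIS_F_diff hu
    have h2 : 1 ≤ Real.exp x := Real.one_le_exp hx.le
    simp only [F] at h1 ⊢
    nlinarith
  have hxle : ∀ n, x ≤ F^[n] x := by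
    intro n; induction n with
    | zero => simp
    | succ n ih =>
      rw [Function.iterate_succ_apply']
      exact le_trans ih (BIS_le_F _)
  have hlin : ∀ n : ℕ, x + n * c ≤ F^[n] x := by
    intro n; induction n with
    | zero => simp
    | succ n ih =>
      rw [Function.iterate_succ_apply']
      have := hgap _ (hxle n)
      push_cast
      nlinarith
  exact tendsto_atTop_mono hlin
    (tendsto_atTop_add_const_left _ x (tendsto_natCast_atTop_atTop.atTop_mul_const hcpos))

end BIS

/-- **Bound on Initial Iteration Steps.**
Fix `s ∈ S_0`, `t > t_s`, `A ≥ 1` and `B, C ≥ 0`. For every `K ≥ 1` there is `N` such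
that `F^∘n(t) ≥ A t*_{σ^n s} + B log K + C` for all `n ≥ N`. The least such `N(K, t)` is
(1) weakly decreasing in `t` for fixed `K`; (2) zero if `t ≥ A t_s* + B log K + C`;
(3) bounded by `N₀ + N₁` whenever `F^∘N₀(t) ≥ A t*_{σ^{N₀} s} + C + 1` and
`F^∘N₁(1) ≥ B log K`. -/
theorem bound_initial_steps (s : ℕ → ℤ) (hs : expBounded s) (t : ℝ)
    (ht : t ∈ rayDomain s) (A B C : ℝ) (hA : 1 ≤ A) (hB : 0 ≤ B) (hC : 0 ≤ C) :
    ∀ K : ℝ, 1 ≤ K →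
      (∃ N : ℕ, ∀ n : ℕ, N ≤ n →
        A * tstarR (shiftSeq^[n] s) + B * Real.log K + C ≤ F^[n] t) ∧
      (∀ t' : ℝ, t ≤ t' →
        sInf {N : ℕ | ∀ n : ℕ, N ≤ n →
            A * tstarR (shiftSeq^[n] s) + B * Real.log K + C ≤ F^[n] t'} ≤
          sInf {N : ℕ | ∀ n : ℕ, N ≤ n →
            A * tstarR (shiftSeq^[n] s) + B * Real.log K + C ≤ F^[n] t}) ∧
      (A * tstarR s + B * Real.log K + C ≤ t →
        sInf {N : ℕ | ∀ n : ℕ, N ≤ n →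
          A * tstarR (shiftSeq^[n] s) + B * Real.log K + C ≤ F^[n] t} = 0) ∧
      (∀ N0 N1 : ℕ,
        A * tstarR (shiftSeq^[N0] s) + C + 1 ≤ F^[N0] t →
        B * Real.log K ≤ F^[N1] 1 →
        ∀ n : ℕ, N0 + N1 ≤ n →
          A * tstarR (shiftSeq^[n] s) + B * Real.log K + C ≤ F^[n] t) := by
  intro K hK
  have hA0 : (0:ℝ) ≤ A := by linarith
  have hlogK : 0 ≤ Real.log K := Real.log_nonneg hK
  have hchain : ∀ n : ℕ, tstarR (shiftSeq^[n+1] s) ≤ F (tstarR (shiftSeq^[n] s)) := by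
    intro n
    rw [Function.iterate_succ_apply' (f := shiftSeq)]
    exact BIS_tstarR_shift_le (BIS_expBounded_shift_iter hs n)
  -- propagation lemma
  have prop : ∀ D : ℝ, 0 ≤ D → ∀ m : ℕ,
      A * tstarR (shiftSeq^[m] s) + D ≤ F^[m] t →
      ∀ n : ℕ, m ≤ n → A * tstarR (shiftSeq^[n] s) + D ≤ F^[n] t := by
    intro D hD m hm n hn
    induction n, hn using Nat.le_induction with
    | base => exact hm
    | succ n hn ih =>
      rw [Function.iterate_succ_apply' (f := F)]
      calc A * tstarR (shiftSeq^[n+1] s) + D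
          ≤ A * F (tstarR (shiftSeq^[n] s)) + D :=
            add_le_add_left (mul_le_mul_of_nonneg_left (hchain n) hA0) D
        _ ≤ F (F^[n] t) := BIS_step1 hA (BIS_tstarR_nonneg _) hD ih
  -- part (d)
  have partd : ∀ N0 N1 : ℕ,
      A * tstarR (shiftSeq^[N0] s) + C + 1 ≤ F^[N0] t →
      B * Real.log K ≤ F^[N1] 1 →
      ∀ n : ℕ, N0 + N1 ≤ n →
        A * tstarR (shiftSeq^[n] s) + B * Real.log K + C ≤ F^[n] t := by
    intro N0 N1 h0 h1 n hn
    have claim : ∀ k : ℕ, A * tstarR (shiftSeq^[N0+k] s) + C + F^[k] 1 ≤ F^[N0+k] t := by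
      intro k
      induction k with
      | zero => simpa using h0
      | succ k ih =>
        have e1 : N0 + (k+1) = (N0 + k) + 1 := rfl
        rw [e1, Function.iterate_succ_apply' (f := F) (n := N0 + k),
          Function.iterate_succ_apply' (f := F) (n := k)]
        calc A * tstarR (shiftSeq^[(N0+k)+1] s) + C + F (F^[k] 1)
            ≤ A * F (tstarR (shiftSeq^[N0+k] s)) + C + F (F^[k] 1) := by
              have := mul_le_mul_of_nonneg_left (hchain (N0+k)) hA0
              linarith
          _ ≤ F (F^[N0+k] t) :=
              BIS_step2 hA (BIS_tstarR_nonneg _) hC (BIS_one_le_iterF k) ih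
    have base : A * tstarR (shiftSeq^[N0+N1] s) + (B * Real.log K + C) ≤ F^[N0+N1] t := by
      have := claim N1; linarith
    have := prop (B * Real.log K + C) (by linarith [mul_nonneg hB hlogK]) (N0+N1) base n hn
    linarith
  -- extract x < t with eventual domination
  have ht0 : 0 < t := by
    have h1 : (0:ℝ≥0∞) < ENNReal.ofReal t := lt_of_le_of_lt zero_le ht
    exact ENNReal.ofReal_pos.mp h1
  have ht' : tmin s < ENNReal.ofReal t := ht
  simp only [tmin] at ht'
  obtain ⟨y, hy, hyt⟩ := sInf_lt_iff.mp ht'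
  obtain ⟨x, hx0, rfl, hlim⟩ := hy
  have hxt : x < t := (ENNReal.ofReal_lt_ofReal_iff ht0).mp hyt
  have hev : ∀ᶠ n in Filter.atTop, |(s n : ℝ)| ≤ F^[n] x := by
    have h1 : Filter.limsup (fun n => ENNReal.ofReal (|(s n : ℝ)| / F^[n] x))
        Filter.atTop < 1 := by
      rw [hlim]; exact zero_lt_one
    filter_upwards [Filter.eventually_lt_of_limsup_lt h1] with n hn
    rw [ENNReal.ofReal_lt_one] at hn
    have := (div_lt_one (BIS_iterF_pos hx0 n)).mp hn
    linarith
  obtain ⟨M, hM⟩ := Filter.eventually_atTop.mp hev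
  have htsb : ∀ n : ℕ, M ≤ n → tstarR (shiftSeq^[n] s) ≤ F^[n] x := by
    intro n hn
    refine BIS_tstarR_le (BIS_iterF_nonneg hx0.le n) fun k => ?_
    rw [BIS_shift_iter_apply, ← Function.iterate_add_apply]
    have := hM (n + k) (le_trans hn (Nat.le_add_right n k))
    rwa [Nat.add_comm k n]
  -- construct N0
  have hδpos : 0 < t - x := by linarith
  have hd : ∀ n : ℕ, F^[n] x + (t - x) ≤ F^[n] t := by
    intro n; induction n with
    | zero => simp
    | succ n ih =>
      rw [Function.iterate_succ_apply' (f := F), Function.iterate_succ_apply' (f := F)]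
      have h1 := BIS_F_diff (a := F^[n] x) (b := F^[n] t) (by linarith)
      have h2 : 1 ≤ Real.exp (F^[n] x) := Real.one_le_exp (BIS_iterF_nonneg hx0.le n)
      nlinarith
  have hd2 : ∀ n : ℕ, Real.exp (F^[n] x) * (t - x) ≤ F^[n+1] t - F^[n+1] x := by
    intro n
    rw [Function.iterate_succ_apply' (f := F), Function.iterate_succ_apply' (f := F)]
    have h1 := BIS_F_diff (a := F^[n] x) (b := F^[n] t) (by linarith [hd n])
    have h2 : 0 < Real.exp (F^[n] x) := Real.exp_pos _
    nlinarith [hd n]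
  have hlarge : ∀ᶠ n : ℕ in Filter.atTop,
      max (Real.log (2*A) / (t - x)) (C + 2) ≤ Real.exp (F^[n] x) :=
    (Real.tendsto_exp_atTop.comp (BIS_iterF_tendsto hx0)).eventually_ge_atTop _
  obtain ⟨n, hn1, hnM⟩ := (hlarge.and (Filter.eventually_ge_atTop M)).exists
  have hdm : Real.log (2*A) ≤ F^[n+1] t - F^[n+1] x := by
    have h0 := hd2 n
    have h1 : Real.log (2*A) / (t - x) ≤ Real.exp (F^[n] x) :=
      le_trans (le_max_left _ _) hn1
    have h2 : Real.log (2*A) = (Real.log (2*A) / (t - x)) * (t - x) := by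
      field_simp
    nlinarith
  have hum : C + 2 ≤ Real.exp (F^[n+1] x) := by
    have h1 : C + 2 ≤ Real.exp (F^[n] x) := le_trans (le_max_right _ _) hn1
    have h2 : F^[n] x ≤ F^[n+1] x := by
      rw [Function.iterate_succ_apply' (f := F)]; exact BIS_le_F _
    exact le_trans h1 (Real.exp_le_exp.2 h2)
  have hN0' : A * (F^[n+2] x) + C + 1 ≤ F^[n+2] t := by
    have e1 : F^[n+2] t = F (F^[n+1] t) := Function.iterate_succ_apply' F (n+1) t
    have e2 : F^[n+2] x = F (F^[n+1] x) := Function.iterate_succ_apply' F (n+1) x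
    have h2A : Real.exp (Real.log (2*A)) = 2*A := Real.exp_log (by linarith)
    have hexpd : 2*A ≤ Real.exp (F^[n+1] t - F^[n+1] x) := by
      rw [← h2A]; exact Real.exp_le_exp.2 hdm
    have hsplit : Real.exp (F^[n+1] t) =
        Real.exp (F^[n+1] x) * Real.exp (F^[n+1] t - F^[n+1] x) := by
      rw [← Real.exp_add]; ring_nf
    rw [e1, e2]
    simp only [F]
    nlinarith [Real.exp_pos (F^[n+1] x),
      mul_le_mul_of_nonneg_left hexpd (Real.exp_pos (F^[n+1] x)).le,
      mul_nonneg (by linarith : (0:ℝ) ≤ A - 1) (Real.exp_pos (F^[n+1] x)).le]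
  have hN0 : A * tstarR (shiftSeq^[n+2] s) + C + 1 ≤ F^[n+2] t := by
    have h1 := htsb (n+2) (by omega)
    have h2 := mul_le_mul_of_nonneg_left h1 hA0
    linarith
  obtain ⟨N1, hN1⟩ := ((BIS_iterF_tendsto one_pos).eventually_ge_atTop (B * Real.log K)).exists
  -- part (a)
  have parta : ∃ N : ℕ, ∀ m : ℕ, N ≤ m →
      A * tstarR (shiftSeq^[m] s) + B * Real.log K + C ≤ F^[m] t :=
    ⟨(n+2) + N1, partd (n+2) N1 hN0 hN1⟩
  refine ⟨parta, ?_, ?_, partd⟩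
  · -- part (b)
    intro t' htt'
    obtain ⟨N, hN⟩ := parta
    have hne : {N : ℕ | ∀ m : ℕ, N ≤ m →
        A * tstarR (shiftSeq^[m] s) + B * Real.log K + C ≤ F^[m] t}.Nonempty := ⟨N, hN⟩
    have hmem := Nat.sInf_mem hne
    apply Nat.sInf_le
    intro m hm
    exact le_trans (hmem m hm) (BIS_iterF_mono m htt')
  · -- part (c)
    intro hbase
    have h0 : A * tstarR (shiftSeq^[0] s) + (B * Real.log K + C) ≤ F^[0] t := by
      simpa using (by linarith : A * tstarR s + (B * Real.log K + C) ≤ t)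
    refine Nat.sInf_eq_zero.2 (Or.inl ?_)
    intro m hm
    have := prop (B * Real.log K + C) (by linarith [mul_nonneg hB hlogK]) 0 h0 m (Nat.zero_le m)
    linarith
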